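/- Let (X,d,H) be an Ahlfors q-regular metric measure space with constant C, let x₀ ∈ X and let ρ > −q. Define the measure μ_ρ by μ_ρ(A) := ∫_A d(x₀,y)^ρ dH(y) for Borel sets A. Then μ_ρ is a doubling measure on X, with doubling constant depending only on C, q and ρ (in particular independent of x₀). -/

import Mathlib

open MeasureTheory Metric Set Filter

/-- A measure is doubling with constant `C`:
`0 < μ(B(x,2r)) ≤ C·μ(B(x,r)) < ∞` for all `x` and `r > 0`. -/
def IsDoublingWith {X : Type*} [MetricSpace X] [MeasurableSpace X]
    (μ : Measure X) (C : NNReal) : Prop :=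
  ∀ (x : X) (r : ℝ), 0 < r →
    0 < μ (ball x (2 * r)) ∧ μ (ball x (2 * r)) ≤ (C : ENNReal) * μ (ball x r) ∧
      (C : ENNReal) * μ (ball x r) < ⊤

/-- A doubling measure: doubling with some constant `C ≥ 1`. -/
def IsDoublingMeasure {X : Type*} [MetricSpace X] [MeasurableSpace X]
    (μ : Measure X) : Prop :=
  ∃ C : NNReal, 1 ≤ C ∧ IsDoublingWith μ C

/-- A uniformly perfect metric space. -/
def UniformlyPerfect (X : Type*) [MetricSpace X] : Prop :=
  (∃ x y : X, x ≠ y) ∧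
    ∃ D : ℝ, 1 ≤ D ∧ ∀ (x : X) (r : ℝ), 0 < r →
      ((Set.univ : Set X) \ ball x r).Nonempty → (ball x r \ ball x (r / D)).Nonempty

/-- A (metrically) doubling space: there is `N` such that every ball of radius `r`
is covered by `N` balls of radius `r/2`. -/
def DoublingSpace (X : Type*) [MetricSpace X] : Prop :=
  ∃ N : ℕ, ∀ (x : X) (r : ℝ), 0 < r →
    ∃ s : Finset X, s.card ≤ N ∧ ball x r ⊆ ⋃ y ∈ s, ball y (r / 2)

/-- Ahlfors `q`-regularity of the measure `H` with constant `C`. -/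
def AhlforsRegular {X : Type*} [MetricSpace X] [MeasurableSpace X]
    (H : Measure X) (q C : ℝ) : Prop :=
  ∀ (x : X) (r : ℝ), 0 < r →
    ENNReal.ofReal (r ^ q / C) ≤ H (ball x r) ∧ H (ball x r) ≤ ENNReal.ofReal (C * r ^ q)

/-- An `(α n)`-regular structure on `X`: Borel "cubes" `Q n i` (for `i ∈ idx n`) with
centers `ctr n i`, radii `rad n i` and constants `d, C₁, C₂, C₃(·)` satisfying
conditions (I)-(V) of Ojala's definition of `(α n)`-regular sets. -/
structure RegularStructure (X : Type*) [MetricSpace X] [MeasurableSpace X]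
    (α : ℕ → ℝ) where
  idx : ℕ → Set ℕ
  Q : ℕ → ℕ → Set X
  ctr : ℕ → ℕ → X
  rad : ℕ → ℕ → ℝ
  d : ℝ
  C₁ : ℝ
  C₂ : ℝ
  C₃ : ℝ → ℝ
  d_pos : 0 < d
  d_le_one : d ≤ 1
  one_le_C₁ : 1 ≤ C₁
  one_le_C₂ : 1 ≤ C₂
  borel : ∀ n, ∀ i ∈ idx n, MeasurableSet (Q n i)
  rad_pos : ∀ n, ∀ i ∈ idx n, 0 < rad n i
  -- (I): each level partitions the space
  cover : ∀ (n : ℕ) (x : X), ∃ i ∈ idx n, x ∈ Q n i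
  pairwise_disj : ∀ n, ∀ i ∈ idx n, ∀ j ∈ idx n, i ≠ j → Q n i ∩ Q n j = ∅
  -- (II): nestedness
  nested : ∀ k m, m ≤ k → ∀ i ∈ idx k, ∀ j ∈ idx m, Q k i ∩ Q m j = ∅ ∨ Q k i ⊆ Q m j
  -- (III): cubes squeezed between balls
  ball_subset : ∀ n, ∀ i ∈ idx n, ball (ctr n i) (rad n i) ⊆ Q n i
  subset_ball : ∀ n, ∀ i ∈ idx n, Q n i ⊆ ball (ctr n i) (C₁ * rad n i)
  -- (IV): size of the child cube containing the center
  center_lower : ∀ n, ∀ i ∈ idx n, ∀ j ∈ idx (n + 1), ctr n i ∈ Q (n + 1) j →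
    (1 / C₂) * α n ^ (1 / d) * rad n i ≤ rad (n + 1) j
  center_upper : ∀ n, ∀ i ∈ idx n, ∀ j ∈ idx (n + 1), ctr n i ∈ Q (n + 1) j →
    rad (n + 1) j ≤ C₂ * α n ^ d * rad n i
  center_proper : ∀ n, ∀ i ∈ idx n, ∀ j ∈ idx (n + 1), ctr n i ∈ Q (n + 1) j →
    (Q n i \ Q (n + 1) j).Nonempty
  -- (V): comparability of radii of nearby cubes of the same level
  one_le_C₃ : ∀ T : ℝ, 1 < T → 1 ≤ C₃ T
  comparable : ∀ T : ℝ, 1 < T → ∀ n, ∀ i ∈ idx n, ∀ j ∈ idx n,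
    (Q n i ∩ ball (ctr n j) (T * rad n j)).Nonempty →
    (1 / C₃ T) * rad n j ≤ rad n i ∧ rad n i ≤ C₃ T * rad n j

namespace RegularStructure

variable {X : Type*} [MetricSpace X] [MeasurableSpace X] {α : ℕ → ℝ}

open scoped Classical

/-- `E_n`: the union over `i ∈ N_n` of `Q_{n,i} ∖ Q_{n+1,j(i)}` where `j(i)` is the
index of the `(n+1)`-cube containing the center `x_{n,i}`. -/
def level (S : RegularStructure X α) (n : ℕ) : Set X :=
  {x | ∃ i ∈ S.idx n, ∃ j ∈ S.idx (n + 1),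
    S.ctr n i ∈ S.Q (n + 1) j ∧ x ∈ S.Q n i \ S.Q (n + 1) j}

/-- The `(α n)`-regular set `E = ⋂ n, E_n` determined by the structure. -/
def limitSet (S : RegularStructure X α) : Set X := ⋂ n, S.level n

/-- `⋂_{i=1}^{n-1} E_i`. -/
def preLevel (S : RegularStructure X α) (n : ℕ) : Set X :=
  ⋂ i ∈ Finset.Icc 1 (n - 1), S.level i

/-- `𝔍_{n,j}`: the union of the `(n+1)`-cubes contained in `B(x_{n,j}, r_{n,j}/2)`. -/
def Jset (S : RegularStructure X α) (n j : ℕ) : Set X :=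
  {x | ∃ i ∈ S.idx (n + 1),
    S.Q (n + 1) i ⊆ ball (S.ctr n j) (S.rad n j / 2) ∧ x ∈ S.Q (n + 1) i}

/-- `IN(B(x,r),n)`: the union of the `n`-cubes contained in `B(x,r)`. -/
def INset (S : RegularStructure X α) (x : X) (r : ℝ) (n : ℕ) : Set X :=
  {y | ∃ j ∈ S.idx n, S.Q n j ⊆ ball x r ∧ y ∈ S.Q n j}

/-- `COV(B(x,r),n)`: the union of the `n`-cubes meeting `B(x,r)`. -/
def COVset (S : RegularStructure X α) (x : X) (r : ℝ) (n : ℕ) : Set X :=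
  {y | ∃ j ∈ S.idx n, (S.Q n j ∩ ball x r).Nonempty ∧ y ∈ S.Q n j}

/-- The normalizing constant `A_{n,j} = H(𝔍_{n,j}) / ∫_{𝔍_{n,j}} d(x_{n,j},y)^ρ dH(y)`. -/
noncomputable def Acoef (S : RegularStructure X α) (H : Measure X) (ρ : ℝ) (n j : ℕ) : ℝ :=
  (H (S.Jset n j)).toReal / ∫ y in S.Jset n j, dist (S.ctr n j) y ^ ρ ∂H

/-- The weight `y_n`: equal to `A_{n,j} d(x_{n,j},x)^ρ` on `𝔍_{n,j}` and `1` elsewhere. -/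
noncomputable def weight (S : RegularStructure X α) (H : Measure X) (ρ : ℝ) (n : ℕ)
    (x : X) : ℝ :=
  if h : ∃ j ∈ S.idx n, x ∈ S.Jset n j then
    S.Acoef H ρ n h.choose * dist (S.ctr n h.choose) x ^ ρ
  else 1

/-- The measure `θ_n` with `dθ_n = y_n dH`. -/
noncomputable def theta (S : RegularStructure X α) (H : Measure X) (ρ : ℝ) (n : ℕ) :
    Measure X :=
  H.withDensity fun x => ENNReal.ofReal (S.weight H ρ n x)

/-- The averaged weight `t_n`: on each `(n+1)`-cube `Q`, equal to `θ_n(Q)/H(Q)`. -/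
noncomputable def avgWeight (S : RegularStructure X α) (H : Measure X) (ρ : ℝ) (n : ℕ)
    (x : X) : ℝ :=
  if h : ∃ i ∈ S.idx (n + 1), x ∈ S.Q (n + 1) i then
    (S.theta H ρ n (S.Q (n + 1) h.choose)).toReal / (H (S.Q (n + 1) h.choose)).toReal
  else 1

/-- `K_n = ∏_{i=n₀}^{n} t_i`. -/
noncomputable def Kweight (S : RegularStructure X α) (H : Measure X) (ρ : ℝ)
    (n₀ n : ℕ) (x : X) : ℝ :=
  ∏ i ∈ Finset.Icc n₀ n, S.avgWeight H ρ i x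

/-- The measure `ν_n` with `dν_n = K_n dH`. -/
noncomputable def nu (S : RegularStructure X α) (H : Measure X) (ρ : ℝ) (n₀ n : ℕ) :
    Measure X :=
  H.withDensity fun x => ENNReal.ofReal (S.Kweight H ρ n₀ n x)

/-- A level `n` is good if `B(x_{n,j}, r_{n,j}/16) ⊆ 𝔍_{n,j}` for all `j`, and balls
`B(x,2r)` with `x ∈ Q_{n,j}`, `r ≤ r_{n,j}/(32 C₃(2C₁))` miss all `𝔍_{n,i}`, `i ≠ j`. -/
def GoodLevel (S : RegularStructure X α) (n : ℕ) : Prop :=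
  (∀ j ∈ S.idx n, ball (S.ctr n j) (S.rad n j / 16) ⊆ S.Jset n j) ∧
  (∀ j ∈ S.idx n, ∀ x ∈ S.Q n j, ∀ r : ℝ, 0 < r →
    r ≤ S.rad n j / (32 * S.C₃ (2 * S.C₁)) →
    ∀ i ∈ S.idx n, i ≠ j → ball x (2 * r) ∩ S.Jset n i = ∅)

/-- Relative plumpness of the `(α n)`-regular set determined by the structure. -/
def RelativelyPlump (S : RegularStructure X α) : Prop :=
  ∃ b : ℝ, 0 < b ∧ ∀ x ∈ S.limitSet, ∀ R : ℝ, 0 < R → ∀ n : ℕ,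
    (∃ j ∈ S.idx n, S.Q n j ⊆ ball x R ∩ S.preLevel n) →
    (∀ m, m < n → ¬ ∃ j ∈ S.idx m, S.Q m j ⊆ ball x R ∩ S.preLevel m) →
    ∃ y ∈ S.preLevel n, ball y (b * R) ⊆ ball x R ∩ S.preLevel n

end RegularStructure

/-- `E ⊆ X` is an `(α n)`-regular set. -/
def IsRegularSet {X : Type*} [MetricSpace X] [MeasurableSpace X]
    (α : ℕ → ℝ) (E : Set X) : Prop :=
  ∃ S : RegularStructure X α, E = S.limitSet



section RadialAux

open ENNReal

variable {X : Type*} [MetricSpace X] [MeasurableSpace X] [BorelSpace X]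

private lemma weight_sandwich {ρ a b t : ℝ} (ha : 0 < a) (h1 : a ≤ t) (h2 : t ≤ b) :
    min (a ^ ρ) (b ^ ρ) ≤ t ^ ρ ∧ t ^ ρ ≤ max (a ^ ρ) (b ^ ρ) := by
  rcases le_or_gt 0 ρ with hρ | hρ
  · exact ⟨(min_le_left _ _).trans (Real.rpow_le_rpow ha.le h1 hρ),
      (Real.rpow_le_rpow (ha.le.trans h1) h2 hρ).trans (le_max_right _ _)⟩
  · exact ⟨(min_le_right _ _).trans (Real.rpow_le_rpow_of_nonpos (ha.trans_le h1) h2 hρ.le),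
      (Real.rpow_le_rpow_of_nonpos ha h1 hρ.le).trans (le_max_left _ _)⟩

set_option linter.unusedSectionVars false

private lemma mu_sandwich (H : Measure X) (ρ : ℝ) (x₀ : X) {s : Set X}
    (hs : MeasurableSet s) {a b : ℝ} (ha : 0 < a)
    (hd : ∀ y ∈ s, a ≤ dist x₀ y ∧ dist x₀ y ≤ b) :
    ENNReal.ofReal (min (a ^ ρ) (b ^ ρ)) * H s
      ≤ (H.withDensity fun y => ENNReal.ofReal (dist x₀ y ^ ρ)) s ∧
    (H.withDensity fun y => ENNReal.ofReal (dist x₀ y ^ ρ)) s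
      ≤ ENNReal.ofReal (max (a ^ ρ) (b ^ ρ)) * H s := by
  rw [withDensity_apply _ hs]
  constructor
  · rw [← setLIntegral_const s]
    exact setLIntegral_mono' hs fun y hy => ENNReal.ofReal_le_ofReal
      (weight_sandwich ha (hd y hy).1 (hd y hy).2).1
  · rw [← setLIntegral_const s]
    exact setLIntegral_mono' hs fun y hy => ENNReal.ofReal_le_ofReal
      (weight_sandwich ha (hd y hy).1 (hd y hy).2).2

private lemma H_singleton (H : Measure X) {q C : ℝ} (hC : 1 ≤ C) (hq : 0 < q)
    (hH : AhlforsRegular H q C) (x₀ : X) : H {x₀} = 0 := by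
  have hC0 : (0:ℝ) < C := lt_of_lt_of_le one_pos hC
  refine le_antisymm ?_ zero_le
  refine ENNReal.le_of_forall_pos_le_add fun ε hε _ => ?_
  set r : ℝ := ((ε : ℝ) / C) ^ (q⁻¹) with hr
  have hεC : (0:ℝ) < (ε : ℝ) / C := div_pos (by exact_mod_cast hε) hC0
  have hrpos : 0 < r := Real.rpow_pos_of_pos hεC _
  have hrq : C * r ^ q = (ε : ℝ) := by
    rw [hr, ← Real.rpow_mul hεC.le, inv_mul_cancel₀ hq.ne', Real.rpow_one]
    field_simp
  have h1 : H {x₀} ≤ H (ball x₀ r) :=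
    measure_mono (singleton_subset_iff.mpr (mem_ball_self hrpos))
  have h2 := (hH x₀ r hrpos).2
  calc H {x₀} ≤ ENNReal.ofReal (C * r ^ q) := h1.trans h2
    _ = ENNReal.ofReal (ε : ℝ) := by rw [hrq]
    _ = (ε : ℝ≥0∞) := ENNReal.ofReal_coe_nnreal
    _ ≤ 0 + ε := by simp

private lemma mu_center_upper (H : Measure X) {q C : ℝ} (hC : 1 ≤ C) (hq : 0 < q)
    (hH : AhlforsRegular H q C) {ρ : ℝ} (hρ : -q < ρ) (x₀ : X) {R : ℝ} (hR : 0 < R) :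
    (H.withDensity fun y => ENNReal.ofReal (dist x₀ y ^ ρ)) (ball x₀ R)
      ≤ ENNReal.ofReal ((C * max 1 ((2:ℝ) ^ (-ρ)) * (1 - ((2:ℝ) ^ (q + ρ))⁻¹)⁻¹)
          * R ^ (q + ρ)) := by
  set μ := H.withDensity fun y => ENNReal.ofReal (dist x₀ y ^ ρ) with hμ
  have hqρ : 0 < q + ρ := by linarith
  have ht1 : 1 < (2:ℝ) ^ (q + ρ) :=
    (Real.one_lt_rpow_iff_of_pos two_pos).mpr (Or.inl ⟨one_lt_two, hqρ⟩)
  set t : ℝ := ((2:ℝ) ^ (q + ρ))⁻¹ with hts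
  have ht0 : 0 < t := inv_pos.mpr (lt_trans one_pos ht1)
  have htlt : t < 1 := inv_lt_one_of_one_lt₀ ht1
  set M : ℝ := max 1 ((2:ℝ) ^ (-ρ)) with hM
  have hM0 : 0 < M := lt_of_lt_of_le one_pos (le_max_left _ _)
  have hC0 : (0:ℝ) < C := lt_of_lt_of_le one_pos hC
  set A : ℕ → Set X := fun k => ball x₀ (R / 2 ^ k) \ ball x₀ (R / 2 ^ (k + 1)) with hA
  -- covering
  have hcover : ball x₀ R ⊆ {x₀} ∪ ⋃ k : ℕ, A k := by
    intro y hy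
    rcases eq_or_ne y x₀ with h | h
    · exact Or.inl (by simp [h])
    have hd0 : 0 < dist y x₀ := dist_pos.mpr h
    have hex : ∃ n : ℕ, R / 2 ^ n ≤ dist y x₀ := by
      obtain ⟨n, hn⟩ := pow_unbounded_of_one_lt (R / dist y x₀) one_lt_two
      refine ⟨n, ?_⟩
      rw [div_le_iff₀ (by positivity)]
      nlinarith [(div_lt_iff₀ hd0).mp hn]
    set n₀ := Nat.find hex with hn₀
    have hspec : R / 2 ^ n₀ ≤ dist y x₀ := Nat.find_spec hex
    have hn₀ne : n₀ ≠ 0 := by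
      intro h0
      rw [h0] at hspec
      simp only [pow_zero, div_one] at hspec
      exact absurd (mem_ball.mp hy) (not_lt.mpr hspec)
    obtain ⟨k, hk⟩ := Nat.exists_eq_succ_of_ne_zero hn₀ne
    have hmin : ¬ R / 2 ^ k ≤ dist y x₀ := Nat.find_min hex (by omega)
    refine Or.inr (mem_iUnion.mpr ⟨k, ?_, ?_⟩)
    · exact mem_ball.mpr (not_le.mp hmin)
    · intro hmem
      rw [hk, Nat.succ_eq_add_one] at hspec
      exact absurd (mem_ball.mp hmem) (not_lt.mpr hspec)
  have hμA : ∀ k : ℕ, μ (A k) ≤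
      ENNReal.ofReal (C * M * R ^ (q + ρ)) * (ENNReal.ofReal t) ^ k := by
    intro k
    have hb0 : (0:ℝ) < R / 2 ^ k := by positivity
    have ha0 : (0:ℝ) < R / 2 ^ (k + 1) := by positivity
    have hmeas : MeasurableSet (A k) := measurableSet_ball.diff measurableSet_ball
    have hd : ∀ y ∈ A k, R / 2 ^ (k + 1) ≤ dist x₀ y ∧ dist x₀ y ≤ R / 2 ^ k := by
      intro y hy
      rw [dist_comm]
      exact ⟨not_lt.mp fun hlt => hy.2 (mem_ball.mpr hlt), (mem_ball.mp hy.1).le⟩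
    have h1 := (mu_sandwich H ρ x₀ hmeas ha0 hd).2
    have h2 : H (A k) ≤ ENNReal.ofReal (C * (R / 2 ^ k) ^ q) :=
      (measure_mono diff_subset).trans (hH x₀ _ hb0).2
    have hmax : max ((R / 2 ^ (k + 1)) ^ ρ) ((R / 2 ^ k) ^ ρ)
        = (R / 2 ^ k) ^ ρ * M := by
      have ha : R / 2 ^ (k + 1) = (R / 2 ^ k) / 2 := by ring
      rw [ha, Real.div_rpow hb0.le (by norm_num : (0:ℝ) ≤ 2),
        div_eq_mul_inv, ← Real.rpow_neg (by norm_num : (0:ℝ) ≤ 2)]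
      rw [hM, mul_max_of_nonneg _ _ (Real.rpow_nonneg hb0.le ρ), mul_one, max_comm]
    have h3 : (R / 2 ^ k) ^ (q + ρ) = (R / 2 ^ k) ^ q * (R / 2 ^ k) ^ ρ :=
      Real.rpow_add hb0 q ρ
    have h2k : ((2:ℝ) ^ k) ^ (q + ρ) = ((2:ℝ) ^ (q + ρ)) ^ k := by
      rw [← Real.rpow_natCast (2:ℝ) k, ← Real.rpow_mul (by norm_num : (0:ℝ) ≤ 2), mul_comm,
        Real.rpow_mul (by norm_num : (0:ℝ) ≤ 2), Real.rpow_natCast]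
    have h4 : (R / 2 ^ k) ^ (q + ρ) = R ^ (q + ρ) * t ^ k := by
      rw [Real.div_rpow hR.le (by positivity), h2k, hts, inv_pow, div_eq_mul_inv]
    have hbpow : (R / 2 ^ k) ^ ρ * (C * (R / 2 ^ k) ^ q) = C * (R ^ (q + ρ) * t ^ k) := by
      rw [← h4, h3]; ring
    calc μ (A k) ≤ ENNReal.ofReal (max ((R / 2 ^ (k+1)) ^ ρ) ((R / 2 ^ k) ^ ρ)) * H (A k) := h1
      _ ≤ ENNReal.ofReal ((R / 2 ^ k) ^ ρ * M) * ENNReal.ofReal (C * (R / 2 ^ k) ^ q) := by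
          rw [← hmax]; exact mul_le_mul_right h2 _
      _ = ENNReal.ofReal ((R / 2 ^ k) ^ ρ * (C * (R / 2 ^ k) ^ q) * M) := by
          rw [← ENNReal.ofReal_mul (by positivity)]; ring_nf
      _ = ENNReal.ofReal (C * M * R ^ (q + ρ) * t ^ k) := by
          congr 1; rw [hbpow]; ring
      _ = ENNReal.ofReal (C * M * R ^ (q + ρ)) * (ENNReal.ofReal t) ^ k := by
          rw [ENNReal.ofReal_mul (by positivity), ENNReal.ofReal_pow ht0.le]
  calc μ (ball x₀ R) ≤ μ ({x₀} ∪ ⋃ k : ℕ, A k) := measure_mono hcover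
    _ ≤ μ {x₀} + μ (⋃ k : ℕ, A k) := measure_union_le _ _
    _ = μ (⋃ k : ℕ, A k) := by
        rw [withDensity_absolutelyContinuous H _ (H_singleton H hC hq hH x₀), zero_add]
    _ ≤ ∑' k : ℕ, μ (A k) := measure_iUnion_le _
    _ ≤ ∑' k : ℕ, ENNReal.ofReal (C * M * R ^ (q + ρ)) * (ENNReal.ofReal t) ^ k :=
        ENNReal.tsum_le_tsum hμA
    _ = ENNReal.ofReal (C * M * R ^ (q + ρ)) * (1 - ENNReal.ofReal t)⁻¹ := by
        rw [ENNReal.tsum_mul_left, ENNReal.tsum_geometric]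
    _ = ENNReal.ofReal (C * M * R ^ (q + ρ)) * ENNReal.ofReal ((1 - t)⁻¹) := by
        rw [← ENNReal.ofReal_one, ← ENNReal.ofReal_sub _ ht0.le,
          ENNReal.ofReal_inv_of_pos (by linarith)]
    _ = ENNReal.ofReal ((C * M * (1 - ((2:ℝ) ^ (q + ρ))⁻¹)⁻¹) * R ^ (q + ρ)) := by
        rw [← ENNReal.ofReal_mul (by positivity)]; congr 1; ring

private lemma mu_near_lower (H : Measure X) {q C : ℝ} (hC : 1 ≤ C) (hq : 0 < q)
    (hH : AhlforsRegular H q C) (ρ : ℝ) (x₀ x : X) {r : ℝ} (hr : 0 < r)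
    (hnear : dist x₀ x < 4 * r) :
    ENNReal.ofReal ((min (((2 * C ^ 2 : ℝ) ^ (-q⁻¹)) ^ ρ) ((5:ℝ) ^ ρ) / (2 * C))
        * r ^ (q + ρ))
      ≤ (H.withDensity fun y => ENNReal.ofReal (dist x₀ y ^ ρ)) (ball x r) := by
  set μ := H.withDensity fun y => ENNReal.ofReal (dist x₀ y ^ ρ) with hμ
  have hC0 : (0:ℝ) < C := lt_of_lt_of_le one_pos hC
  set ε : ℝ := (2 * C ^ 2 : ℝ) ^ (-q⁻¹) with hε
  have hε0 : 0 < ε := Real.rpow_pos_of_pos (by positivity) _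
  have hεq : C * (ε * r) ^ q = r ^ q / (2 * C) := by
    rw [Real.mul_rpow hε0.le hr.le, hε,
      ← Real.rpow_mul (by positivity : (0:ℝ) ≤ 2 * C ^ 2), neg_mul,
      inv_mul_cancel₀ hq.ne', Real.rpow_neg_one]
    field_simp
  set s : Set X := ball x r \ ball x₀ (ε * r) with hs
  have hmeas : MeasurableSet s := measurableSet_ball.diff measurableSet_ball
  have hHs : ENNReal.ofReal (r ^ q / (2 * C)) ≤ H s := by
    have h1 : ENNReal.ofReal (r ^ q / C) ≤ H (ball x r) := (hH x r hr).1
    have h2 : H (ball x₀ (ε * r)) ≤ ENNReal.ofReal (r ^ q / (2 * C)) := by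
      have := (hH x₀ (ε * r) (by positivity)).2
      rwa [hεq] at this
    have h3 : H (ball x r) ≤ H s + H (ball x₀ (ε * r)) :=
      (measure_mono (subset_diff_union _ _)).trans (measure_union_le _ _)
    have h4 : ENNReal.ofReal (r ^ q / (2 * C)) + ENNReal.ofReal (r ^ q / (2 * C))
        ≤ H s + ENNReal.ofReal (r ^ q / (2 * C)) := by
      calc ENNReal.ofReal (r ^ q / (2 * C)) + ENNReal.ofReal (r ^ q / (2 * C))
          = ENNReal.ofReal (r ^ q / C) := by
            rw [← ENNReal.ofReal_add (by positivity) (by positivity)]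
            congr 1; field_simp; ring
        _ ≤ H (ball x r) := h1
        _ ≤ H s + H (ball x₀ (ε * r)) := h3
        _ ≤ H s + ENNReal.ofReal (r ^ q / (2 * C)) := add_le_add_right h2 _
    exact (ENNReal.add_le_add_iff_right ENNReal.ofReal_ne_top).mp h4
  have hd : ∀ y ∈ s, ε * r ≤ dist x₀ y ∧ dist x₀ y ≤ 5 * r := by
    intro y hy
    constructor
    · rw [dist_comm]; exact not_lt.mp fun hlt => hy.2 (mem_ball.mpr hlt)
    · have ht := dist_triangle x₀ x y
      have h5 : dist x y < r := by rw [dist_comm]; exact mem_ball.mp hy.1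
      linarith
  have h6 := (mu_sandwich H ρ x₀ hmeas (by positivity : (0:ℝ) < ε * r) hd).1
  have hminpos : 0 < min (ε ^ ρ) ((5:ℝ) ^ ρ) :=
    lt_min (Real.rpow_pos_of_pos hε0 _) (Real.rpow_pos_of_pos (by norm_num) _)
  have hmin : min ((ε * r) ^ ρ) ((5 * r) ^ ρ) = min (ε ^ ρ) ((5:ℝ) ^ ρ) * r ^ ρ := by
    rw [Real.mul_rpow hε0.le hr.le, Real.mul_rpow (by norm_num : (0:ℝ) ≤ 5) hr.le,
      min_mul_of_nonneg _ _ (Real.rpow_nonneg hr.le ρ)]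
  calc ENNReal.ofReal ((min (ε ^ ρ) ((5:ℝ) ^ ρ) / (2 * C)) * r ^ (q + ρ))
      = ENNReal.ofReal (min ((ε * r) ^ ρ) ((5 * r) ^ ρ))
          * ENNReal.ofReal (r ^ q / (2 * C)) := by
        rw [← ENNReal.ofReal_mul (by positivity)]
        congr 1
        rw [hmin, Real.rpow_add hr]
        field_simp
    _ ≤ ENNReal.ofReal (min ((ε * r) ^ ρ) ((5 * r) ^ ρ)) * H s := mul_le_mul_right hHs _
    _ ≤ μ s := h6
    _ ≤ μ (ball x r) := measure_mono diff_subset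

private lemma finish_doubling {μ1 μ2 : ℝ≥0∞} (hμ : μ1 ≤ μ2) {U Lo c : ℝ} (hLo : 0 < Lo)
    (h1 : μ2 ≤ ENNReal.ofReal U) (h2 : ENNReal.ofReal Lo ≤ μ1) (hc : U ≤ c * Lo)
    {C' : NNReal} (hcC : c ≤ (C' : ℝ)) :
    0 < μ2 ∧ μ2 ≤ (C' : ℝ≥0∞) * μ1 ∧ (C' : ℝ≥0∞) * μ1 < ⊤ := by
  refine ⟨lt_of_lt_of_le (ENNReal.ofReal_pos.mpr hLo) (h2.trans hμ), ?_, ?_⟩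
  · calc μ2 ≤ ENNReal.ofReal U := h1
      _ ≤ ENNReal.ofReal ((C' : ℝ) * Lo) :=
          ENNReal.ofReal_le_ofReal (hc.trans (mul_le_mul_of_nonneg_right hcC hLo.le))
      _ = ENNReal.ofReal (C' : ℝ) * ENNReal.ofReal Lo := ENNReal.ofReal_mul C'.coe_nonneg
      _ = (C' : ℝ≥0∞) * ENNReal.ofReal Lo := by rw [ENNReal.ofReal_coe_nnreal]
      _ ≤ (C' : ℝ≥0∞) * μ1 := mul_le_mul_right h2 _
  · exact lt_of_le_of_lt (mul_le_mul_right (hμ.trans h1) _)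
      (ENNReal.mul_lt_top ENNReal.coe_lt_top ENNReal.ofReal_lt_top)

end RadialAux

/-- in an Ahlfors `q`-regular space, `d(x₀,·)^ρ dH` is doubling for
`ρ > -q`, with constant independent of `x₀`. -/
theorem radial_weight_doubling {X : Type*} [MetricSpace X] [MeasurableSpace X]
    [BorelSpace X]
    (H : Measure X) (q C : ℝ) (hC : 1 ≤ C) (hq : 0 < q)
    (hH : AhlforsRegular H q C) (ρ : ℝ) (hρ : -q < ρ) :
    ∃ C' : NNReal, 1 ≤ C' ∧ ∀ x₀ : X,
      IsDoublingWith (H.withDensity fun y => ENNReal.ofReal (dist x₀ y ^ ρ)) C' := by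
  have hC0 : (0:ℝ) < C := lt_of_lt_of_le one_pos hC
  have hqρ : 0 < q + ρ := by linarith
  set M₁ : ℝ := max (((2:ℝ)⁻¹) ^ ρ) ((2:ℝ) ^ ρ) with hM₁
  set m₁ : ℝ := min (((2:ℝ)⁻¹) ^ ρ) ((2:ℝ) ^ ρ) with hm₁
  have hM₁0 : 0 < M₁ :=
    lt_of_lt_of_le (Real.rpow_pos_of_pos (by norm_num) _) (le_max_left _ _)
  have hm₁0 : 0 < m₁ :=
    lt_min (Real.rpow_pos_of_pos (by norm_num) _) (Real.rpow_pos_of_pos (by norm_num) _)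
  set K : ℝ := C * max 1 ((2:ℝ) ^ (-ρ)) * (1 - ((2:ℝ) ^ (q + ρ))⁻¹)⁻¹ with hK
  have ht1 : 1 < (2:ℝ) ^ (q + ρ) :=
    (Real.one_lt_rpow_iff_of_pos two_pos).mpr (Or.inl ⟨one_lt_two, hqρ⟩)
  have hK0 : 0 < K := by
    refine mul_pos (mul_pos hC0 (lt_of_lt_of_le one_pos (le_max_left _ _)))
      (inv_pos.mpr (sub_pos.mpr (inv_lt_one_of_one_lt₀ ht1)))
  set ε : ℝ := (2 * C ^ 2 : ℝ) ^ (-q⁻¹) with hε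
  have hε0 : 0 < ε := Real.rpow_pos_of_pos (by positivity) _
  set mε : ℝ := min (ε ^ ρ) ((5:ℝ) ^ ρ) with hmε
  have hmε0 : 0 < mε :=
    lt_min (Real.rpow_pos_of_pos hε0 _) (Real.rpow_pos_of_pos (by norm_num) _)
  set c₁ : ℝ := M₁ / m₁ * C ^ 2 * (2:ℝ) ^ q with hc₁
  set c₂ : ℝ := K * (6:ℝ) ^ (q + ρ) * (2 * C) / mε with hc₂
  refine ⟨(max c₁ c₂).toNNReal ⊔ 1, le_sup_right, ?_⟩
  have hcC : ∀ c : ℝ, c ≤ max c₁ c₂ → c ≤ (((max c₁ c₂).toNNReal ⊔ 1 : NNReal) : ℝ) :=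
    fun c hc => hc.trans ((Real.le_coe_toNNReal (max c₁ c₂)).trans
      (by exact_mod_cast (le_sup_left : (max c₁ c₂).toNNReal ≤ (max c₁ c₂).toNNReal ⊔ 1)))
  intro x₀
  unfold IsDoublingWith
  intro x r hr
  set μ := H.withDensity fun y => ENNReal.ofReal (dist x₀ y ^ ρ) with hμd
  have hμball : μ (ball x r) ≤ μ (ball x (2 * r)) :=
    measure_mono (ball_subset_ball (by linarith))
  rcases lt_or_ge (dist x₀ x) (4 * r) with hnear | hfar
  · -- near case
    have hsub : ball x (2 * r) ⊆ ball x₀ (6 * r) := by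
      intro y hy
      have h1 : dist y x < 2 * r := mem_ball.mp hy
      have h2 : dist x x₀ < 4 * r := by rw [dist_comm]; exact hnear
      have h3 := dist_triangle y x x₀
      exact mem_ball.mpr (by linarith)
    have hU : μ (ball x (2 * r)) ≤ ENNReal.ofReal (K * (6 * r) ^ (q + ρ)) := by
      calc μ (ball x (2 * r)) ≤ μ (ball x₀ (6 * r)) := measure_mono hsub
        _ ≤ ENNReal.ofReal (K * (6 * r) ^ (q + ρ)) :=
            mu_center_upper H hC hq hH hρ x₀ (by positivity)
    have hL : ENNReal.ofReal (mε / (2 * C) * r ^ (q + ρ)) ≤ μ (ball x r) :=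
      mu_near_lower H hC hq hH ρ x₀ x hr hnear
    refine finish_doubling hμball ?_ hU hL ?_ (hcC c₂ (le_max_right _ _))
    · exact mul_pos (div_pos hmε0 (by positivity)) (Real.rpow_pos_of_pos hr _)
    · have h6r : (6 * r : ℝ) ^ (q + ρ) = (6:ℝ) ^ (q + ρ) * r ^ (q + ρ) :=
        Real.mul_rpow (by norm_num) hr.le
      rw [h6r, hc₂]
      apply le_of_eq
      field_simp
  · -- far case
    set D : ℝ := dist x₀ x with hD
    have hD0 : 0 < D := lt_of_lt_of_le (by linarith) hfar
    have hd2 : ∀ y ∈ ball x (2 * r), D / 2 ≤ dist x₀ y ∧ dist x₀ y ≤ 2 * D := by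
      intro y hy
      have h1 : dist x y < 2 * r := by rw [dist_comm]; exact mem_ball.mp hy
      have h2 := dist_triangle x₀ x y
      have h3 := dist_triangle x₀ y x
      rw [dist_comm y x] at h3
      constructor <;> [linarith; linarith]
    have hmax : max ((D / 2) ^ ρ) ((2 * D) ^ ρ) = D ^ ρ * M₁ := by
      rw [div_eq_mul_inv, Real.mul_rpow hD0.le (by norm_num : (0:ℝ) ≤ 2⁻¹),
        mul_comm (2:ℝ) D, Real.mul_rpow hD0.le (by norm_num : (0:ℝ) ≤ 2),
        ← mul_max_of_nonneg _ _ (Real.rpow_nonneg hD0.le ρ)]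
    have hmin : min ((D / 2) ^ ρ) ((2 * D) ^ ρ) = D ^ ρ * m₁ := by
      rw [div_eq_mul_inv, Real.mul_rpow hD0.le (by norm_num : (0:ℝ) ≤ 2⁻¹),
        mul_comm (2:ℝ) D, Real.mul_rpow hD0.le (by norm_num : (0:ℝ) ≤ 2),
        ← mul_min_of_nonneg _ _ (Real.rpow_nonneg hD0.le ρ)]
    have hU : μ (ball x (2 * r)) ≤ ENNReal.ofReal (D ^ ρ * M₁ * (C * (2 * r) ^ q)) := by
      have h1 := (mu_sandwich H ρ x₀ measurableSet_ball (half_pos hD0) hd2).2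
      have h2 : H (ball x (2 * r)) ≤ ENNReal.ofReal (C * (2 * r) ^ q) :=
        (hH x (2 * r) (by positivity)).2
      calc μ (ball x (2 * r))
          ≤ ENNReal.ofReal (max ((D / 2) ^ ρ) ((2 * D) ^ ρ)) * H (ball x (2 * r)) := h1
        _ ≤ ENNReal.ofReal (max ((D / 2) ^ ρ) ((2 * D) ^ ρ))
            * ENNReal.ofReal (C * (2 * r) ^ q) := mul_le_mul_right h2 _
        _ = ENNReal.ofReal (D ^ ρ * M₁ * (C * (2 * r) ^ q)) := by
            rw [hmax, ← ENNReal.ofReal_mul (by positivity)]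
    have hL : ENNReal.ofReal (D ^ ρ * m₁ * (r ^ q / C)) ≤ μ (ball x r) := by
      have hd1 : ∀ y ∈ ball x r, D / 2 ≤ dist x₀ y ∧ dist x₀ y ≤ 2 * D :=
        fun y hy => hd2 y (ball_subset_ball (by linarith) hy)
      have h1 := (mu_sandwich H ρ x₀ measurableSet_ball (half_pos hD0) hd1).1
      have h2 : ENNReal.ofReal (r ^ q / C) ≤ H (ball x r) := (hH x r hr).1
      calc ENNReal.ofReal (D ^ ρ * m₁ * (r ^ q / C))
          = ENNReal.ofReal (min ((D / 2) ^ ρ) ((2 * D) ^ ρ)) * ENNReal.ofReal (r ^ q / C) := by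
            rw [hmin, ← ENNReal.ofReal_mul (by positivity)]
        _ ≤ ENNReal.ofReal (min ((D / 2) ^ ρ) ((2 * D) ^ ρ)) * H (ball x r) :=
            mul_le_mul_right h2 _
        _ ≤ μ (ball x r) := h1
    refine finish_doubling hμball ?_ hU hL ?_ (hcC c₁ (le_max_left _ _))
    · exact mul_pos (mul_pos (Real.rpow_pos_of_pos hD0 _) hm₁0)
        (div_pos (Real.rpow_pos_of_pos hr _) hC0)
    · have h2r : (2 * r : ℝ) ^ q = (2:ℝ) ^ q * r ^ q :=
        Real.mul_rpow (by norm_num) hr.le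
      rw [h2r, hc₁]
      apply le_of_eq
      field_simp
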